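/- There exists an odd n₀ ∈ ℕ such that for every odd n ≥ n₀ and all t, u ∈ [0,1], K_n(t,u) > 0. -/

import Mathlib

open Set MeasureTheory Filter
open intervalIntegral

/-- For odd `n`, the real `n`-th root of `x` (the unique `y` with `y^n = x`). -/
noncomputable def oddRoot (n : ℕ) (x : ℝ) : ℝ :=
  if 0 ≤ x then x ^ ((n:ℝ)⁻¹) else -((-x) ^ ((n:ℝ)⁻¹))

/-- `b_n = (1/ⁿ√4)^(n-1) · (1 + 2/n)`. -/
noncomputable def bseq (n : ℕ) : ℝ :=
  (1 / oddRoot n 4) ^ (n - 1) * (1 + 2 / (n : ℝ))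

/-- `c_n > 0` is defined by `c_n³ = (1/2)·∫_{-1/2}^{1/2} du/(2 + ⁿ√u)²`. -/
noncomputable def cseq (n : ℕ) : ℝ :=
  ((1 / 2) * ∫ u in (-(1/2) : ℝ)..(1/2), 1 / (2 + oddRoot n u) ^ 2) ^ ((3:ℝ)⁻¹)

/-- The kernel `K_n(t,u)`. -/
noncomputable def Kn (n : ℕ) (t u : ℝ) : ℝ :=
  (1 - bseq n * (cseq n) ^ 3 * oddRoot n (u - 1/2) *
      (oddRoot n ((u - 1/2) ^ 2) - 4) ^ 2 * oddRoot n (t - 1/2)) /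
    ((cseq n) ^ 2 * (oddRoot n (u - 1/2) + 2) ^ 2)

lemma oddRoot_continuous {n : ℕ} (hn : n ≠ 0) : Continuous (oddRoot n) := by
  have hne : ((n:ℝ)⁻¹) ≠ 0 := by
    simp [Nat.cast_ne_zero.mpr hn]
  have h : (0:ℝ) ≤ (n:ℝ)⁻¹ := by positivity
  have h1 : Continuous fun x : ℝ => x ^ ((n:ℝ)⁻¹) := Real.continuous_rpow_const h
  have h2 : Continuous fun x : ℝ => -((-x) ^ ((n:ℝ)⁻¹)) := (h1.comp continuous_neg).neg
  have key := Continuous.if_le h1 h2 continuous_const continuous_id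
    (f := fun _ : ℝ => (0:ℝ)) (fun x hx => by
      simp only [id] at hx
      rw [← hx]
      simp [Real.zero_rpow hne])
  exact key

lemma oddRoot_nonneg {n : ℕ} {x : ℝ} (hx : 0 ≤ x) : 0 ≤ oddRoot n x := by
  rw [oddRoot, if_pos hx]; positivity

lemma oddRoot_nonpos {n : ℕ} (hn : n ≠ 0) {x : ℝ} (hx : x ≤ 0) : oddRoot n x ≤ 0 := by
  have hne : ((n:ℝ)⁻¹) ≠ 0 := by simp [Nat.cast_ne_zero.mpr hn]
  rcases hx.lt_or_eq with h | h
  · rw [oddRoot, if_neg (not_le.mpr h)]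
    have : 0 ≤ (-x) ^ ((n:ℝ)⁻¹) := Real.rpow_nonneg (by linarith) _
    linarith
  · rw [h, oddRoot, if_pos le_rfl, Real.zero_rpow hne]

lemma oddRoot_le_one {n : ℕ} (hn : n ≠ 0) {x : ℝ} (h1 : x ≤ 1) : oddRoot n x ≤ 1 := by
  rcases le_total 0 x with h0 | h0
  · rw [oddRoot, if_pos h0]
    exact Real.rpow_le_one h0 h1 (by positivity)
  · linarith [oddRoot_nonpos (n := n) hn h0]

lemma neg_one_le_oddRoot {n : ℕ} {x : ℝ} (h1 : -1 ≤ x) : -1 ≤ oddRoot n x := by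
  rcases le_total 0 x with h0 | h0
  · linarith [oddRoot_nonneg (n := n) h0]
  · rcases h0.lt_or_eq with h | h
    · rw [oddRoot, if_neg (not_le.mpr h)]
      have : (-x) ^ ((n:ℝ)⁻¹) ≤ 1 :=
        Real.rpow_le_one (by linarith) (by linarith) (by positivity)
      linarith
    · rw [h, oddRoot, if_pos le_rfl]
      have : (0:ℝ) ≤ 0 ^ ((n:ℝ)⁻¹) := Real.rpow_nonneg le_rfl _
      linarith

lemma oddRoot_sq {n : ℕ} (hn : n ≠ 0) (y : ℝ) : oddRoot n (y^2) = (oddRoot n y)^2 := by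
  have hne : ((n:ℝ)⁻¹) ≠ 0 := by simp [Nat.cast_ne_zero.mpr hn]
  have main : ∀ z : ℝ, 0 ≤ z → oddRoot n (z^2) = (oddRoot n z)^2 := by
    intro z hz
    rw [oddRoot, oddRoot, if_pos (by positivity), if_pos hz,
      ← Real.rpow_natCast (z ^ ((n:ℝ)⁻¹)) 2, ← Real.rpow_natCast z 2,
      ← Real.rpow_mul hz, ← Real.rpow_mul hz, mul_comm]
  rcases le_total 0 y with hy | hy
  · exact main y hy
  · have key : oddRoot n y = -oddRoot n (-y) := by
      rcases hy.lt_or_eq with h | h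
      · rw [oddRoot, oddRoot, if_neg (not_le.mpr h), if_pos (by linarith)]
      · rw [h]; simp [oddRoot, Real.zero_rpow hne]
    rw [← neg_sq, main (-y) (by linarith), key, neg_sq]

lemma bseq_nonneg {n : ℕ} : 0 ≤ bseq n := by
  have h4 : oddRoot n 4 = (4:ℝ) ^ ((n:ℝ)⁻¹) := by rw [oddRoot, if_pos (by norm_num)]
  rw [bseq, h4]
  have : (0:ℝ) < (4:ℝ) ^ ((n:ℝ)⁻¹) := Real.rpow_pos_of_pos (by norm_num) _
  positivity

lemma bseq_le {n : ℕ} (hn : 21 ≤ n) : bseq n ≤ 0.302 := by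
  have hn0 : (0:ℝ) < (n:ℝ) := by positivity
  have h4 : oddRoot n 4 = (4:ℝ) ^ ((n:ℝ)⁻¹) := by rw [oddRoot, if_pos (by norm_num)]
  have hpow : (1 / oddRoot n 4) ^ (n - 1) = (4:ℝ) ^ ((n:ℝ)⁻¹ - 1) := by
    rw [h4, one_div, ← Real.rpow_neg (by norm_num), ← Real.rpow_natCast ((4:ℝ) ^ (-(n:ℝ)⁻¹)) (n-1),
      ← Real.rpow_mul (by norm_num)]
    congr 1
    have : ((n - 1 : ℕ) : ℝ) = (n:ℝ) - 1 := by
      have : 1 ≤ n := by omega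
      push_cast [this]; ring
    rw [this]
    field_simp
    ring
  have hb : bseq n = (4:ℝ) ^ ((n:ℝ)⁻¹ - 1) * (1 + 2 / (n:ℝ)) := by rw [bseq, hpow]
  have h1 : (4:ℝ) ^ ((n:ℝ)⁻¹ - 1) ≤ (4:ℝ) ^ ((21:ℝ)⁻¹ - 1) := by
    apply Real.rpow_le_rpow_of_exponent_le (by norm_num)
    have : (21:ℝ) ≤ (n:ℝ) := by exact_mod_cast hn
    have h21 : (n:ℝ)⁻¹ ≤ (21:ℝ)⁻¹ := by
      apply inv_anti₀ (by norm_num) this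
    linarith
  have h2 : (4:ℝ) ^ ((21:ℝ)⁻¹ - 1) ≤ 1.1 / 4 := by
    rw [Real.rpow_sub (by norm_num), Real.rpow_one]
    have : (4:ℝ) ^ ((21:ℝ)⁻¹) ≤ 1.1 := by
      have key : ((1.1:ℝ) ^ (21:ℕ)) ^ ((21:ℝ)⁻¹) = 1.1 := by
        rw [show ((21:ℝ)⁻¹) = (((21:ℕ):ℝ))⁻¹ by norm_num]
        exact Real.pow_rpow_inv_natCast (by norm_num) (by norm_num)
      calc (4:ℝ) ^ ((21:ℝ)⁻¹) ≤ ((1.1:ℝ) ^ (21:ℕ)) ^ ((21:ℝ)⁻¹) := by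
            apply Real.rpow_le_rpow (by norm_num) (by norm_num) (by norm_num)
        _ = 1.1 := key
    linarith
  have h3 : 1 + 2 / (n:ℝ) ≤ 1 + 2 / 21 := by
    have h21 : (21:ℝ) ≤ (n:ℝ) := by exact_mod_cast hn
    have : 2 / (n:ℝ) ≤ 2 / 21 := by
      apply div_le_div_of_nonneg_left (by norm_num) (by norm_num) h21
    linarith
  have hp : (0:ℝ) < (4:ℝ) ^ ((n:ℝ)⁻¹ - 1) := Real.rpow_pos_of_pos (by norm_num) _
  rw [hb]
  calc (4:ℝ) ^ ((n:ℝ)⁻¹ - 1) * (1 + 2 / (n:ℝ))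
      ≤ (1.1/4) * (1 + 2/21) := by
        apply mul_le_mul (le_trans h1 h2) h3 (by positivity) (by norm_num)
    _ ≤ 0.302 := by norm_num

lemma integrand_intble {n : ℕ} (hn : n ≠ 0) {a b : ℝ} (hab : a ≤ b) (ha : -1 ≤ a) (hb : b ≤ 1) :
    IntervalIntegrable (fun u : ℝ => 1 / (2 + oddRoot n u) ^ 2) volume a b := by
  apply ContinuousOn.intervalIntegrable
  rw [uIcc_of_le hab]
  apply ContinuousOn.div continuousOn_const
  · exact ((continuous_const.add (oddRoot_continuous hn)).pow 2).continuousOn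
  · intro u hu
    have h1 : -1 ≤ oddRoot n u := neg_one_le_oddRoot (by linarith [hu.1])
    have h2 : (0:ℝ) < 2 + oddRoot n u := by linarith
    positivity

lemma integral_bounds {n : ℕ} (hn : n ≠ 0) :
    (1:ℝ)/9 ≤ (∫ u in (-(1/2) : ℝ)..(1/2), 1 / (2 + oddRoot n u) ^ 2) ∧
    (∫ u in (-(1/2) : ℝ)..(1/2), 1 / (2 + oddRoot n u) ^ 2) ≤ 5/8 := by
  set g : ℝ → ℝ := fun u => 1 / (2 + oddRoot n u) ^ 2 with hg
  have hi : IntervalIntegrable g volume (-(1/2)) (1/2) :=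
    integrand_intble hn (by norm_num) (by norm_num) (by norm_num)
  have hi1 : IntervalIntegrable g volume (-(1/2)) 0 :=
    integrand_intble hn (by norm_num) (by norm_num) (by norm_num)
  have hi2 : IntervalIntegrable g volume 0 (1/2) :=
    integrand_intble hn (by norm_num) (by norm_num) (by norm_num)
  constructor
  · have hmono : ∀ u ∈ Icc (-(1/2):ℝ) (1/2), (1:ℝ)/9 ≤ g u := by
      intro u hu
      have h1 : -1 ≤ oddRoot n u := neg_one_le_oddRoot (by linarith [hu.1])
      have h2 : oddRoot n u ≤ 1 := oddRoot_le_one hn (by linarith [hu.2])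
      have h0 : (0:ℝ) < 2 + oddRoot n u := by linarith
      have hpos : (0:ℝ) < (2 + oddRoot n u)^2 := by positivity
      rw [hg]
      rw [div_le_div_iff₀ (by norm_num) hpos]
      nlinarith
    have := integral_mono_on (by norm_num : (-(1/2):ℝ) ≤ 1/2)
      (intervalIntegrable_const) hi hmono
    norm_num at this ⊢; linarith
  · have hsplit : (∫ u in (-(1/2):ℝ)..(1/2), g u)
        = (∫ u in (-(1/2):ℝ)..0, g u) + ∫ u in (0:ℝ)..(1/2), g u :=
      (integral_add_adjacent_intervals hi1 hi2).symm
    have hb1 : (∫ u in (-(1/2):ℝ)..0, g u) ≤ 1/2 := by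
      have hmono : ∀ u ∈ Icc (-(1/2):ℝ) 0, g u ≤ 1 := by
        intro u hu
        have h1 : -1 ≤ oddRoot n u := neg_one_le_oddRoot (by linarith [hu.1])
        have h0 : (0:ℝ) < 2 + oddRoot n u := by linarith
        have hpos : (0:ℝ) < (2 + oddRoot n u)^2 := by positivity
        rw [hg, div_le_one hpos]
        nlinarith
      have := integral_mono_on (by norm_num : (-(1/2):ℝ) ≤ 0) hi1
        (intervalIntegrable_const) hmono
      norm_num at this ⊢; linarith
    have hb2 : (∫ u in (0:ℝ)..(1/2), g u) ≤ 1/8 := by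
      have hmono : ∀ u ∈ Icc (0:ℝ) (1/2), g u ≤ 1/4 := by
        intro u hu
        have h1 : 0 ≤ oddRoot n u := oddRoot_nonneg hu.1
        have h0 : (0:ℝ) < 2 + oddRoot n u := by linarith
        have hpos : (0:ℝ) < (2 + oddRoot n u)^2 := by positivity
        rw [hg, div_le_div_iff₀ hpos (by norm_num)]
        nlinarith
      have := integral_mono_on (by norm_num : (0:ℝ) ≤ 1/2) hi2
        (intervalIntegrable_const) hmono
      norm_num at this ⊢; linarith
    rw [hsplit]; linarith

lemma cseq_props {n : ℕ} (hn : n ≠ 0) :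
    0 < cseq n ∧ (1:ℝ)/18 ≤ (cseq n)^3 ∧ (cseq n)^3 ≤ 5/16 := by
  obtain ⟨hlo, hhi⟩ := integral_bounds hn
  set S : ℝ := (1 / 2) * ∫ u in (-(1/2) : ℝ)..(1/2), 1 / (2 + oddRoot n u) ^ 2 with hS
  have hS1 : (1:ℝ)/18 ≤ S := by rw [hS]; linarith
  have hS2 : S ≤ 5/16 := by rw [hS]; linarith
  have hSpos : 0 < S := by linarith
  have hc : cseq n = S ^ ((3:ℝ)⁻¹) := rfl
  have hcube : (cseq n)^3 = S := by
    rw [hc, show ((3:ℝ)⁻¹) = (((3:ℕ):ℝ))⁻¹ by norm_num]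
    exact Real.rpow_inv_natCast_pow hSpos.le (by norm_num)
  refine ⟨?_, by rw [hcube]; exact hS1, by rw [hcube]; exact hS2⟩
  rw [hc]; exact Real.rpow_pos_of_pos hSpos _

lemma quintic_bound {z : ℝ} (h1 : -1 ≤ z) (h2 : z ≤ 1) : z * (z^2 - 4)^2 ≤ 10 := by
  nlinarith [sq_nonneg (z - 1), sq_nonneg (z + 1), sq_nonneg (z^2 - 1), sq_nonneg z,
    sq_nonneg (z^2 + z), sq_nonneg (z^2 - z),
    mul_nonneg (mul_nonneg (by linarith : (0:ℝ) ≤ 1 - z) (by linarith : (0:ℝ) ≤ z + 1)) (sq_nonneg z),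
    mul_nonneg (mul_nonneg (by linarith : (0:ℝ) ≤ 1 - z) (by linarith : (0:ℝ) ≤ z + 1)) (sq_nonneg (z-1)),
    mul_nonneg (mul_nonneg (by linarith : (0:ℝ) ≤ 1 - z) (by linarith : (0:ℝ) ≤ z + 1)) (sq_nonneg (z+1))]

theorem stmt_12 :
    ∃ n₀ : ℕ, Odd n₀ ∧ ∀ n : ℕ, n₀ ≤ n → Odd n →
      ∀ t ∈ Icc (0:ℝ) 1, ∀ u ∈ Icc (0:ℝ) 1, 0 < Kn n t u := by
  refine ⟨21, ⟨10, by norm_num⟩, ?_⟩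
  intro n hn _ t ht u hu
  have hn0 : n ≠ 0 := by omega
  obtain ⟨hcpos, hc3lo, hc3hi⟩ := cseq_props hn0
  have hble := bseq_le hn
  have hb0 := bseq_nonneg (n := n)
  set x := oddRoot n (u - 1/2) with hxdef
  set y := oddRoot n (t - 1/2) with hydef
  have hx1 : -1 ≤ x := neg_one_le_oddRoot (by linarith [hu.1])
  have hx2 : x ≤ 1 := oddRoot_le_one hn0 (by linarith [hu.2])
  have hy1 : -1 ≤ y := neg_one_le_oddRoot (by linarith [ht.1])
  have hy2 : y ≤ 1 := oddRoot_le_one hn0 (by linarith [ht.2])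
  have hsq : oddRoot n ((u - 1/2)^2) = x^2 := oddRoot_sq hn0 _
  rw [Kn, hsq]
  apply div_pos
  · -- numerator
    have hf1 : x * (x^2 - 4)^2 ≤ 10 := quintic_bound hx1 hx2
    have hf2 : (-x) * ((-x)^2 - 4)^2 ≤ 10 := quintic_bound (by linarith) (by linarith)
    have hf2' : -10 ≤ x * (x^2 - 4)^2 := by nlinarith [hf2]
    have hX : x * (x^2 - 4)^2 * y ≤ 10 := by
      nlinarith [mul_nonneg (sub_nonneg.2 hf1) (sub_nonneg.2 hy2),
        mul_nonneg (sub_nonneg.2 hf2') (by linarith : (0:ℝ) ≤ y + 1)]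
    have hbc : 0 ≤ bseq n * (cseq n)^3 := mul_nonneg hb0 (by linarith)
    have hbc2 : bseq n * (cseq n)^3 ≤ 0.302 * (5/16) :=
      mul_le_mul hble hc3hi (by linarith) (by norm_num)
    have key : bseq n * (cseq n)^3 * x * (x^2 - 4)^2 * y ≤ 0.302 * (5/16) * 10 := by
      have h1 : bseq n * (cseq n)^3 * (x * (x^2 - 4)^2 * y) ≤ bseq n * (cseq n)^3 * 10 :=
        mul_le_mul_of_nonneg_left hX hbc
      have h2 : bseq n * (cseq n)^3 * 10 ≤ 0.302 * (5/16) * 10 := by linarith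
      nlinarith [h1, h2]
    nlinarith [key]
  · -- denominator
    have h2 : (0:ℝ) < x + 2 := by linarith
    positivity
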